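/- arXiv:1909.12360 — 9 statements merged into one kernel-verified Lean document; each statement's English description precedes it below -/
import Mathlib

section
/- Let D be an upper semicontinuous decomposition of a topological space M into compact subsets. Then D is monotone (every member is connected) if and only if π⁻¹(C) is connected for every connected subset C of M/D. -/
open Set Function Topology

/-- General monotone map lemma: a continuous closed surjection with connected
fibers pulls back connected sets to connected sets. -/
lemma key_monotone {α β : Type*} [TopologicalSpace α] [TopologicalSpace β]
    {f : α → β} (hcont : Continuous f) (hclosed : IsClosedMap f)
    (hsurj : Function.Surjective f)
    (hfib : ∀ b : β, IsConnected (f ⁻¹' {b}))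
    {C : Set β} (hC : IsConnected C) : IsConnected (f ⁻¹' C) := by
  set S : Set α := f ⁻¹' C with hS
  -- the restriction of f
  let g : S → C := fun x => ⟨f x.1, x.2⟩
  have hgcont : Continuous g := Continuous.subtype_mk (hcont.comp continuous_subtype_val) _
  have hgsurj : Function.Surjective g := by
    rintro ⟨c, hc⟩
    obtain ⟨x, rfl⟩ := hsurj c
    exact ⟨⟨x, hc⟩, rfl⟩
  -- restriction is a closed map
  have hgclosed : IsClosedMap g := by
    intro U hU
    rw [isClosed_induced_iff] at hU
    obtain ⟨F, hF, rfl⟩ := hU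
    have himg : g '' (Subtype.val ⁻¹' F) = Subtype.val ⁻¹' (f '' F) := by
      ext ⟨c, hc⟩
      constructor
      · rintro ⟨⟨x, hx⟩, hxF, heq⟩
        exact ⟨x, hxF, congrArg Subtype.val heq⟩
      · rintro ⟨x, hxF, hfx⟩
        have hxS : x ∈ S := by simp only [hS, mem_preimage, hfx]; exact hc
        exact ⟨⟨x, hxS⟩, hxF, Subtype.ext hfx⟩
    rw [himg, isClosed_induced_iff]
    exact ⟨f '' F, hclosed F hF, rfl⟩
  -- fibers of g are connected
  have hgfib : ∀ c : C, IsConnected (g ⁻¹' {c}) := by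
    rintro ⟨c, hc⟩
    have hsub : f ⁻¹' {c} ⊆ S := by
      intro x hx
      simp only [mem_preimage, mem_singleton_iff] at hx
      simp [hS, hx, hc]
    have heq : (Subtype.val : S → α) '' (g ⁻¹' {(⟨c, hc⟩ : C)}) = f ⁻¹' {c} := by
      ext x
      constructor
      · rintro ⟨⟨y, hy⟩, hmem, rfl⟩
        simpa [g, Subtype.ext_iff] using hmem
      · intro hx
        exact ⟨⟨x, hsub hx⟩, by simpa [g, Subtype.ext_iff] using hx, rfl⟩
    constructor
    · obtain ⟨x, hx⟩ := (hfib c).1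
      exact ⟨⟨x, hsub hx⟩, by simpa [g, Subtype.ext_iff] using hx⟩
    · rw [← IsInducing.subtypeVal.isPreconnected_image, heq]
      exact (hfib c).2
  -- g is a quotient map
  have hgq : IsQuotientMap g := hgclosed.isQuotientMap hgcont hgsurj
  have hcl : ∀ T : Set C, IsClosed T ↔ IsClosed (g ⁻¹' T) := fun T =>
    ⟨fun h => h.preimage hgcont, fun h => hgq.isClosed_preimage.mp h⟩
  -- the base C is a connected space
  haveI : ConnectedSpace C := isConnected_iff_connectedSpace.mp hC
  obtain ⟨c₀⟩ : Nonempty C := inferInstance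
  have h1 : IsConnected (g ⁻¹' connectedComponent c₀) :=
    preimage_connectedComponent_connected hgfib hgq.isCoinducing c₀
  have h2 : connectedComponent c₀ = (univ : Set C) :=
    PreconnectedSpace.connectedComponent_eq_univ c₀
  rw [h2, preimage_univ] at h1
  have : ConnectedSpace S := connectedSpace_iff_univ.mpr h1
  exact isConnected_iff_connectedSpace.mpr this

/-- An upper semicontinuous decomposition `D` of `M` into compact
subsets is monotone (every member connected) iff the preimage of every connected
subset of `M/D` is connected. -/
theorem stmt_3 {M : Type*} [TopologicalSpace M] (D : Set (Set M))
    (hcompact : ∀ d ∈ D, IsCompact d)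
    (hne : ∅ ∉ D)
    (H : ∀ a : M, ∃! b ∈ D, a ∈ b)
    (husc : IsClosedMap (Quotient.mk (Setoid.mkClasses D H))) :
    (∀ d ∈ D, IsConnected d) ↔
      ∀ C : Set (Quotient (Setoid.mkClasses D H)), IsConnected C →
        IsConnected (Quotient.mk (Setoid.mkClasses D H) ⁻¹' C) := by
  set s := Setoid.mkClasses D H with hs
  set f : M → Quotient s := Quotient.mk s with hf
  -- fibers of f are exactly the members of D
  have hfiber : ∀ y : M, f ⁻¹' {f y} = { x | s x y } := by
    intro y
    ext x
    simp only [mem_preimage, mem_singleton_iff, hf, Quotient.eq]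
    rfl
  have hfibD : ∀ y : M, f ⁻¹' {f y} ∈ D := by
    intro y
    rw [hfiber]
    exact Setoid.eqv_class_mem H
  constructor
  · intro hmono C hC
    have hcont : Continuous f := continuous_quot_mk
    have hsurj : Function.Surjective f := Quotient.exists_rep
    have hfib : ∀ q : Quotient s, IsConnected (f ⁻¹' {q}) := by
      intro q
      obtain ⟨y, rfl⟩ := hsurj q
      exact hmono _ (hfibD y)
    exact key_monotone hcont husc hsurj hfib hC
  · intro hpre d hd
    have hdne : d.Nonempty := by
      rcases eq_empty_or_nonempty d with rfl | h
      · exact absurd hd hne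
      · exact h
    obtain ⟨y, hy⟩ := hdne
    have hdeq : d = f ⁻¹' {f y} := by
      rw [hfiber]
      exact Setoid.eq_eqv_class_of_mem H hd hy
    rw [hdeq]
    exact hpre {f y} isConnected_singleton
end

section
/- Let D be an upper semicontinuous monotone decomposition of a topological space M, let {x} be a singleton member of D, and suppose M/D is locally connected at π(x). Then M is locally connected at x. -/
open Filter Topology

/-- A surjective closed continuous map with preconnected fibers pulls back
preconnected sets to preconnected sets. -/
lemma aux_preimage_preconnected {α β : Type*} [TopologicalSpace α] [TopologicalSpace β]
    {f : α → β} (hcl : IsClosedMap f) (hsur : Function.Surjective f)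
    (hfib : ∀ b, IsPreconnected (f ⁻¹' {b})) {s : Set β} (hs : IsPreconnected s) :
    IsPreconnected (f ⁻¹' s) := by
  rw [isPreconnected_closed_iff] at hs ⊢
  rintro t t' ht ht' hcov ⟨x, hxs, hxt⟩ ⟨x', hx's, hx't⟩
  obtain ⟨b, hbs, ⟨y, hyt, hyb⟩, ⟨y', hy't, hy'b⟩⟩ :=
    hs (f '' t) (f '' t') (hcl t ht) (hcl t' ht')
      (fun b hb => by
        obtain ⟨a, rfl⟩ := hsur b
        rcases hcov hb with h | h
        · exact Or.inl ⟨a, h, rfl⟩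
        · exact Or.inr ⟨a, h, rfl⟩)
      ⟨f x, hxs, x, hxt, rfl⟩ ⟨f x', hx's, x', hx't, rfl⟩
  obtain ⟨z, hzb, hzt, hzt'⟩ :=
    isPreconnected_closed_iff.1 (hfib b) t t' ht ht'
      (fun a ha => hcov (by simp only [Set.mem_preimage] at ha ⊢; rw [ha]; exact hbs))
      ⟨y, hyb, hyt⟩ ⟨y', hy'b, hy't⟩
  exact ⟨z, by simp only [Set.mem_preimage] at hzb ⊢; rw [hzb]; exact hbs, hzt, hzt'⟩

/-- If `D` is an upper semicontinuous monotone decomposition of `M`,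
`{x}` is a singleton member of `D`, and `M/D` is locally connected at `π(x)`,
then `M` is locally connected at `x`. ("Locally connected at a point": every
neighborhood of the point contains a connected neighborhood of the point.) -/
theorem stmt_4 {M : Type*} [TopologicalSpace M] (D : Set (Set M))
    (hcompact : ∀ d ∈ D, IsCompact d)
    (hconn : ∀ d ∈ D, IsConnected d)
    (H : ∀ a : M, ∃! b ∈ D, a ∈ b)
    (husc : IsClosedMap (Quotient.mk (Setoid.mkClasses D H)))
    (x : M) (hx : {x} ∈ D)
    (hlc : ∀ U ∈ 𝓝 (Quotient.mk (Setoid.mkClasses D H) x),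
      ∃ V ∈ 𝓝 (Quotient.mk (Setoid.mkClasses D H) x), V ⊆ U ∧ IsConnected V) :
    ∀ U ∈ 𝓝 x, ∃ V ∈ 𝓝 x, V ⊆ U ∧ IsConnected V := by
  set π : M → Quotient (Setoid.mkClasses D H) := Quotient.mk (Setoid.mkClasses D H) with hπ
  -- the fiber over π y is the element of D containing y
  have hfiber : ∀ y : M, ∀ d ∈ D, y ∈ d → π ⁻¹' {π y} = d := by
    intro y d hd hyd
    ext z
    simp only [Set.mem_preimage, Set.mem_singleton_iff, hπ, Quotient.eq]
    rw [Setoid.eq_eqv_class_of_mem H hd hyd]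
    rfl
  have hfibconn : ∀ b : Quotient (Setoid.mkClasses D H), IsPreconnected (π ⁻¹' {b}) := by
    intro b
    induction b using Quotient.ind with
    | _ y =>
      obtain ⟨d, ⟨hd, hyd⟩, _⟩ := H y
      rw [show (Quotient.mk _ y : Quotient (Setoid.mkClasses D H)) = π y from rfl,
        hfiber y d hd hyd]
      exact (hconn d hd).isPreconnected
  have hfx : π ⁻¹' {π x} = {x} := hfiber x {x} hx rfl
  intro U hU
  obtain ⟨U₀, hU₀U, hU₀open, hxU₀⟩ := mem_nhds_iff.1 hU
  set O : Set (Quotient (Setoid.mkClasses D H)) := (π '' U₀ᶜ)ᶜ with hO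
  have hOopen : IsOpen O := (husc _ hU₀open.isClosed_compl).isOpen_compl
  have hπxO : π x ∈ O := by
    rintro ⟨y, hy, hyx⟩
    have : y ∈ π ⁻¹' {π x} := hyx
    rw [hfx] at this
    exact hy (this ▸ hxU₀)
  obtain ⟨V', hV'nhds, hV'O, hV'conn⟩ := hlc O (hOopen.mem_nhds hπxO)
  have hcont : Continuous π := continuous_quotient_mk'
  refine ⟨π ⁻¹' V', hcont.continuousAt.preimage_mem_nhds hV'nhds, ?_, ?_⟩
  · intro y hy
    have : π y ∈ O := hV'O hy
    by_contra hyU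
    exact this ⟨y, fun h => hyU (hU₀U h), rfl⟩
  · refine ⟨?_, aux_preimage_preconnected husc (Quotient.mk_surjective) hfibconn
      hV'conn.isPreconnected⟩
    obtain ⟨b, hb⟩ := hV'conn.nonempty
    obtain ⟨y, rfl⟩ := Quotient.mk_surjective b
    exact ⟨y, hb⟩
end

section
/- Let A be a null family of compact subsets of a metric space M (for each ε > 0 only finitely many members of A have diameter greater than ε). Suppose q ∈ M lies in no member of A. Then every neighborhood U of q contains a smaller neighborhood V of q such that every A ∈ A meeting V is contained in U. -/
open Filter Topology

/-- If `𝓐` is a null family of compact subsets of a metric space `M`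
and `q` lies in no member of `𝓐`, then every neighborhood `U` of `q` contains a
neighborhood `V` of `q` such that every member of `𝓐` meeting `V` is contained
in `U`. -/
theorem stmt_5 {M : Type*} [MetricSpace M] (𝓐 : Set (Set M))
    (hcpt : ∀ A ∈ 𝓐, IsCompact A)
    (hnull : ∀ ε > (0:ℝ), {A | A ∈ 𝓐 ∧ ε < Metric.diam A}.Finite)
    (q : M) (hq : ∀ A ∈ 𝓐, q ∉ A) :
    ∀ U ∈ 𝓝 q, ∃ V ∈ 𝓝 q, V ⊆ U ∧ ∀ A ∈ 𝓐, (A ∩ V).Nonempty → A ⊆ U := by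
  intro U hU
  obtain ⟨ε, hε, hball⟩ := Metric.mem_nhds_iff.mp hU
  have hF := hnull (ε/3) (by linarith)
  -- union of the "big" sets is compact, hence closed, and q is not in it
  set K : Set M := ⋃ A ∈ hF.toFinset, A with hK
  have hKc : IsCompact K := hF.toFinset.isCompact_biUnion (fun A hA => by
    have := (Set.Finite.mem_toFinset hF).mp hA
    exact hcpt A this.1)
  have hqK : q ∉ K := by
    intro h
    rw [hK, Set.mem_iUnion₂] at h
    obtain ⟨A, hA, hqA⟩ := h
    exact hq A ((Set.Finite.mem_toFinset hF).mp hA).1 hqA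
  have hopen : Kᶜ ∈ 𝓝 q := hKc.isClosed.isOpen_compl.mem_nhds hqK
  obtain ⟨r1, hr1, hr1K⟩ := Metric.mem_nhds_iff.mp hopen
  refine ⟨Metric.ball q (min r1 (ε/3)), Metric.ball_mem_nhds q (by positivity), ?_, ?_⟩
  · intro x hx
    apply hball
    simp only [Metric.mem_ball] at hx ⊢
    have := min_le_right r1 (ε/3)
    linarith [hx.trans_le this]
  · rintro A hA ⟨x, hxA, hxV⟩
    have hdiam : Metric.diam A ≤ ε/3 := by
      by_contra h
      push_neg at h
      have hAF : A ∈ hF.toFinset := (Set.Finite.mem_toFinset hF).mpr ⟨hA, h⟩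
      have : x ∈ K := Set.mem_biUnion hAF hxA
      have hx' : x ∈ Metric.ball q r1 :=
        Metric.ball_subset_ball (min_le_left _ _) hxV
      exact hr1K hx' this
    intro y hy
    apply hball
    have h1 : dist q x < ε/3 := lt_of_lt_of_le (Metric.mem_ball'.mp hxV) (min_le_right _ _)
    have h2 : dist x y ≤ Metric.diam A :=
      Metric.dist_le_diam_of_mem (hcpt A hA).isBounded hxA hy
    have : dist q y ≤ dist q x + dist x y := dist_triangle q x y
    simp only [Metric.mem_ball]
    rw [dist_comm]
    linarith
end

section
/- Let D be a decomposition of a metric space M into compact subsets, and suppose the collection of non-singleton members of D forms a null family. Then D is an upper semicontinuous decomposition. -/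
/-- If `D` is a decomposition of a metric space `M` into compact
subsets whose non-singleton members form a null family, then `D` is upper
semicontinuous: for each member `d` and open `U ⊇ d` there is an open `V ⊇ d`
such that every member of `D` meeting `V` is contained in `U`. -/
theorem stmt_6 {M : Type*} [MetricSpace M] (D : Set (Set M))
    (hcpt : ∀ d ∈ D, IsCompact d)
    (H : ∀ a : M, ∃! b ∈ D, a ∈ b)
    (hnull : ∀ ε > (0:ℝ),
      {d | d ∈ D ∧ (¬ ∃ x : M, d = {x}) ∧ ε < Metric.diam d}.Finite) :
    ∀ d ∈ D, ∀ U : Set M, IsOpen U → d ⊆ U →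
      ∃ V : Set M, IsOpen V ∧ d ⊆ V ∧ ∀ d' ∈ D, (d' ∩ V).Nonempty → d' ⊆ U := by
  intro d hd U hU hdU
  obtain ⟨r, hr, hthick⟩ := (hcpt d hd).exists_thickening_subset_open hU hdU
  -- Bad members: large members not contained in U
  set F : Set (Set M) := {d' | d' ∈ D ∧ ¬ d' ⊆ U ∧ r / 2 < Metric.diam d'} with hF
  have hFfin : F.Finite := by
    apply (hnull (r / 2) (by linarith)).subset
    rintro d' ⟨hd'D, hd'U, hd'diam⟩
    refine ⟨hd'D, ?_, hd'diam⟩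
    rintro ⟨x, rfl⟩
    simp [Metric.diam_singleton] at hd'diam
    linarith
  have hBc : IsCompact (⋃ d' ∈ F, d') :=
    hFfin.isCompact_biUnion (fun d' hd' => hcpt d' hd'.1)
  set B := ⋃ d' ∈ F, d' with hB
  refine ⟨Metric.thickening (r / 2) d \ B, Metric.isOpen_thickening.sdiff hBc.isClosed,
    ?_, ?_⟩
  · intro x hx
    refine ⟨Metric.self_subset_thickening (by linarith) d hx, ?_⟩
    intro hxB
    simp only [hB, Set.mem_iUnion] at hxB
    obtain ⟨d', hd'F, hxd'⟩ := hxB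
    obtain ⟨hd'D, hd'U, _⟩ := hd'F
    -- d = d' by uniqueness, contradiction with d ⊆ U
    obtain ⟨b, hb, hbu⟩ := H x
    have h1 : d = b := hbu d ⟨hd, hx⟩
    have h2 : d' = b := hbu d' ⟨hd'D, hxd'⟩
    have : d' = d := h2.trans h1.symm
    exact hd'U (this ▸ hdU)
  · rintro d' hd'D ⟨x, hxd', hxth, hxB⟩
    by_cases hsub : d' ⊆ U
    · exact hsub
    · -- d' is not in F (else x ∈ B), so diam d' ≤ r/2
      have hdiam : Metric.diam d' ≤ r / 2 := by
        by_contra h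
        push_neg at h
        exact hxB (Set.mem_biUnion (show d' ∈ F from ⟨hd'D, hsub, h⟩) hxd')
      intro y hyd'
      apply hthick
      have h1 : Metric.infDist y d ≤ Metric.infDist x d + dist y x :=
        Metric.infDist_le_infDist_add_dist
      have h2 : dist y x ≤ Metric.diam d' :=
        Metric.dist_le_diam_of_mem ((hcpt d' hd'D).isBounded) hyd' hxd'
      have hdne : d.Nonempty := by
        rcases d.eq_empty_or_nonempty with h | h
        · rw [h, Metric.thickening_empty] at hxth
          exact absurd hxth (Set.notMem_empty x)
        · exact h
      have h3 : Metric.infDist x d < r / 2 :=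
        (Metric.mem_thickening_iff_infDist_lt hdne).mp hxth
      exact (Metric.mem_thickening_iff_infDist_lt hdne).mpr (by linarith)
end

section
/- A compact, connected, locally connected metrizable topological space is path connected. -/
open Metric Set Filter Topology

section Peano

variable {M : Type*} [MetricSpace M] [CompactSpace M] [LocallyConnectedSpace M]

/-- Uniform local connectedness for a compact locally connected metric space. -/
lemma peano_ulc (ε : ℝ) (hε : 0 < ε) :
    ∃ δ > 0, ∀ a b : M, dist a b < δ →
      ∃ S : Set M, IsPreconnected S ∧ a ∈ S ∧ b ∈ S ∧
        ∀ p ∈ S, ∀ q ∈ S, dist p q ≤ ε := by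
  have h : ∀ x : M, ∃ V : Set M, V ⊆ ball x (ε / 2) ∧ IsOpen V ∧ x ∈ V ∧ IsConnected V :=
    fun x => locallyConnectedSpace_iff_subsets_isOpen_isConnected.mp ‹_› x
      (ball x (ε / 2)) (ball_mem_nhds x (by linarith))
  choose V hVsub hVopen hVmem hVconn using h
  obtain ⟨δ, hδ, hl⟩ := lebesgue_number_lemma_of_metric isCompact_univ hVopen
    (fun x _ => mem_iUnion.mpr ⟨x, hVmem x⟩)
  refine ⟨δ, hδ, fun a b hab => ?_⟩
  obtain ⟨i, hi⟩ := hl a (mem_univ a)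
  refine ⟨V i, (hVconn i).isPreconnected, hi (mem_ball_self hδ),
    hi (by simpa [mem_ball, dist_comm] using hab), fun p hp q hq => ?_⟩
  have hp' := hVsub i hp
  have hq' := hVsub i hq
  rw [mem_ball] at hp' hq'
  calc dist p q ≤ dist p i + dist i q := dist_triangle _ _ _
    _ ≤ ε / 2 + ε / 2 := add_le_add hp'.le (by rw [dist_comm]; exact hq'.le)
    _ = ε := by ring

/-- Any two points of a preconnected set are joined by a δ-chain inside the set. -/
lemma peano_chain {S : Set M} (hS : IsPreconnected S) {a b : M} (ha : a ∈ S) (hb : b ∈ S)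
    {δ : ℝ} (hδ : 0 < δ) :
    ∃ (m : ℕ) (q : ℕ → M), q 0 = a ∧ (∀ i, m ≤ i → q i = b) ∧ (∀ i, q i ∈ S) ∧
      (∀ i, dist (q i) (q (i + 1)) < δ) := by
  haveI : PreconnectedSpace S := Subtype.preconnectedSpace hS
  let r : S → S → Prop := fun p q => dist p q < δ
  let T : Set S := {z | Relation.ReflTransGen r ⟨a, ha⟩ z}
  have hTopen : IsOpen T := by
    rw [Metric.isOpen_iff]
    intro z hz
    exact ⟨δ, hδ, fun w hw => hz.tail (show dist z w < δ by
      rw [mem_ball, dist_comm] at hw; exact hw)⟩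
  have hTclosed : IsClosed T := by
    rw [← isOpen_compl_iff, Metric.isOpen_iff]
    intro z hz
    refine ⟨δ, hδ, fun w hw hwT => hz (hwT.tail ?_)⟩
    rw [mem_ball] at hw
    exact hw
  have hT : T = univ := IsClopen.eq_univ (s := T) ⟨hTclosed, hTopen⟩ ⟨⟨a, ha⟩, .refl⟩
  have hreach : Relation.ReflTransGen r ⟨a, ha⟩ ⟨b, hb⟩ := eq_univ_iff_forall.mp hT ⟨b, hb⟩
  have main : ∀ z : S, Relation.ReflTransGen r ⟨a, ha⟩ z →
      ∃ (m : ℕ) (q : ℕ → S), q 0 = ⟨a, ha⟩ ∧ (∀ i, m ≤ i → q i = z) ∧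
        (∀ i, dist (q i) (q (i + 1)) < δ) := by
    intro z hz
    induction hz with
    | refl => exact ⟨0, fun _ => ⟨a, ha⟩, rfl, fun i _ => rfl, fun i => by simpa using hδ⟩
    | @tail c d hc hcd ih =>
      obtain ⟨m, q, hq0, hqt, hqs⟩ := ih
      refine ⟨m + 1, fun i => if i ≤ m then q i else d, by simp [hq0], fun i hi => ?_,
        fun i => ?_⟩
      · have : ¬ i ≤ m := by omega
        simp [this]
      · by_cases h1 : i + 1 ≤ m
        · have h2 : i ≤ m := by omega
          simpa [h1, h2] using hqs i
        · by_cases h2 : i ≤ m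
          · have h3 : i = m := by omega
            subst h3
            simp only [if_pos le_rfl, if_neg h1]
            rw [hqt _ le_rfl]
            exact hcd
          · simpa [h1, h2] using hδ
  obtain ⟨m, q, hq0, hqt, hqs⟩ := main ⟨b, hb⟩ hreach
  refine ⟨m, fun i => (q i : M), by simp [hq0], fun i hi => by simp [hqt i hi], fun i => (q i).2,
    fun i => ?_⟩
  simpa [Subtype.dist_eq] using hqs i

/-- An approximation to a path from `x` to `y` at scale `ε`. -/
structure PApprox (M : Type*) [MetricSpace M] (x y : M) (ε : ℝ) where
  N : ℕ
  Npos : 0 < N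
  c : ℕ → M
  c0 : c 0 = x
  ctail : ∀ k, N ≤ k → c k = y
  conn : ∀ k, ∃ S : Set M, IsPreconnected S ∧ c k ∈ S ∧ c (k + 1) ∈ S ∧
    ∀ p ∈ S, ∀ q ∈ S, dist p q ≤ ε

lemma PApprox.dist_succ {x y : M} {ε : ℝ} (A : PApprox M x y ε) (k : ℕ) :
    dist (A.c k) (A.c (k + 1)) ≤ ε := by
  obtain ⟨S, _, h1, h2, h3⟩ := A.conn k
  exact h3 _ h1 _ h2

/-- Refinement of an approximation at a finer scale. -/
lemma PApprox.refine {x y : M} {ε ε' : ℝ} (hε : 0 ≤ ε) (hε' : 0 < ε')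
    (A : PApprox M x y ε) :
    ∃ p : PApprox M x y ε' × ℕ, 0 < p.2 ∧ p.1.N = A.N * p.2 ∧
      ∀ k, dist (p.1.c k) (A.c (k / p.2)) ≤ ε := by
  obtain ⟨δ, hδ, hULC⟩ := peano_ulc (M := M) ε' hε'
  choose S hSconn hSmem1 hSmem2 hSdiam using A.conn
  have hch : ∀ k, ∃ (m : ℕ) (q : ℕ → M), q 0 = A.c k ∧ (∀ i, m ≤ i → q i = A.c (k + 1)) ∧
      (∀ i, q i ∈ S k) ∧ (∀ i, dist (q i) (q (i + 1)) < δ) :=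
    fun k => peano_chain (hSconn k) (hSmem1 k) (hSmem2 k) hδ
  choose mf q hq0 hqtail hqmem hqstep using hch
  set m : ℕ := (Finset.range A.N).sup mf + 1 with hm
  have hmpos : 0 < m := Nat.succ_pos _
  have hmge : ∀ k, k < A.N → mf k ≤ m - 1 := fun k hk => by
    have := Finset.le_sup (f := mf) (Finset.mem_range.mpr hk)
    omega
  set c' : ℕ → M := fun k => if A.N * m ≤ k then y else q (k / m) (k % m) with hc'
  have hNm : 0 < A.N * m := Nat.mul_pos A.Npos hmpos
  have hdivlt : ∀ k, k < A.N * m → k / m < A.N := fun k hk =>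
    Nat.div_lt_of_lt_mul (by rwa [Nat.mul_comm] at hk)
  have hval : ∀ k, k < A.N * m → c' k = q (k / m) (k % m) := fun k hk => by
    simp only [hc', if_neg (not_le.mpr hk)]
  have hvaly : ∀ k, A.N * m ≤ k → c' k = y := fun k hk => by
    simp only [hc', if_pos hk]
  -- step bound
  have hstep : ∀ k, dist (c' k) (c' (k + 1)) < δ := by
    intro k
    have hk' : (k / m) * m + k % m = k := Nat.div_add_mod' k m
    by_cases hk : A.N * m ≤ k
    · rw [hvaly k hk, hvaly (k + 1) (le_trans hk (Nat.le_succ k))]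
      simpa using hδ
    · push_neg at hk
      have hj : k / m < A.N := hdivlt k hk
      have hmod : k % m < m := Nat.mod_lt _ hmpos
      rw [hval k hk]
      by_cases hb : k % m + 1 < m
      · -- interior step
        have hk1 : k + 1 < A.N * m := by
          have h2 : (k / m + 1) * m ≤ A.N * m := Nat.mul_le_mul_right m hj
          have h3 : (k / m + 1) * m = (k / m) * m + m := Nat.succ_mul _ _
          omega
        have e1 : k + 1 = k % m + 1 + (k / m) * m := by omega
        have hdiv1 : (k + 1) / m = k / m := by
          rw [e1, Nat.add_mul_div_right _ _ hmpos, Nat.div_eq_of_lt hb, Nat.zero_add]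
        have hmod1 : (k + 1) % m = k % m + 1 := by
          rw [e1, Nat.add_mul_mod_self_right, Nat.mod_eq_of_lt hb]
        rw [hval (k + 1) hk1, hdiv1, hmod1]
        exact hqstep (k / m) (k % m)
      · -- boundary within the refinement of one interval
        have hbm : k % m = m - 1 := by omega
        have hqend : q (k / m) (k % m) = A.c (k / m + 1) :=
          hqtail (k / m) (k % m) (by have := hmge (k / m) hj; omega)
        have hk1 : k + 1 = (k / m + 1) * m := by
          have : (k / m + 1) * m = (k / m) * m + m := Nat.succ_mul _ _
          omega
        rw [hqend]
        by_cases hend : A.N * m ≤ k + 1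
        · rw [hvaly (k + 1) hend]
          have hNle : A.N ≤ k / m + 1 := by
            by_contra hcon
            push_neg at hcon
            have : (k / m + 1) * m < A.N * m := (Nat.mul_lt_mul_right hmpos).mpr hcon
            omega
          rw [A.ctail (k / m + 1) hNle]
          simpa using hδ
        · push_neg at hend
          have hdiv1 : (k + 1) / m = k / m + 1 := by
            rw [hk1, Nat.mul_div_cancel _ hmpos]
          have hmod1 : (k + 1) % m = 0 := by
            rw [hk1, Nat.mul_mod_left]
          rw [hval (k + 1) hend, hdiv1, hmod1, hq0 (k / m + 1)]
          simpa using hδ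
  -- parent estimate
  have hparent : ∀ k, dist (c' k) (A.c (k / m)) ≤ ε := by
    intro k
    by_cases hk : A.N * m ≤ k
    · rw [hvaly k hk, A.ctail (k / m) ((Nat.le_div_iff_mul_le hmpos).mpr hk)]
      simpa using hε
    · push_neg at hk
      rw [hval k hk]
      exact hSdiam (k / m) _ (hqmem (k / m) (k % m)) _ (hSmem1 (k / m))
  have hc0 : c' 0 = x := by rw [hval 0 hNm, Nat.zero_div, Nat.zero_mod, hq0 0, A.c0]
  exact ⟨⟨⟨A.N * m, hNm, c', hc0, hvaly, fun k => hULC _ _ (hstep k)⟩, m⟩, hmpos, rfl, hparent⟩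

end Peano

lemma peano_key {M : Type*} [MetricSpace M] [CompactSpace M] [ConnectedSpace M]
    [LocallyConnectedSpace M] : PathConnectedSpace M := by
  refine ⟨inferInstance, fun x y => ?_⟩
  obtain ⟨C, hC⟩ := Metric.isBounded_iff.mp (isCompact_univ (X := M)).isBounded
  set K : ℝ := 2 * max C 1 with hKdef
  have hK : 0 < K := by
    have : (0:ℝ) < max C 1 := lt_of_lt_of_le one_pos (le_max_right _ _)
    positivity
  have hCK : ∀ p q : M, dist p q ≤ K / 2 := fun p q => by
    have := hC (mem_univ p) (mem_univ q)
    have h2 : C ≤ max C 1 := le_max_left _ _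
    rw [hKdef]; linarith
  set ε : ℕ → ℝ := fun n => K / 2 / 2 ^ n with hε
  have hεpos : ∀ n, 0 < ε n := fun n => by rw [hε]; positivity
  -- base approximation
  let A0 : PApprox M x y (ε 0) :=
    ⟨1, one_pos, fun k => if k = 0 then x else y, by simp,
      fun k hk => if_neg (by omega),
      fun k => ⟨univ, isPreconnected_univ, trivial, trivial,
        fun p _ q _ => by simpa [hε] using hCK p q⟩⟩
  have step : ∀ n (A : PApprox M x y (ε n)), ∃ p : PApprox M x y (ε (n+1)) × ℕ,
      0 < p.2 ∧ p.1.N = A.N * p.2 ∧ ∀ k, dist (p.1.c k) (A.c (k / p.2)) ≤ ε n :=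
    fun n A => A.refine (hεpos n).le (hεpos (n+1))
  let A : ∀ n, PApprox M x y (ε n) := fun n => Nat.rec A0 (fun n B => (step n B).choose.1) n
  have hspec : ∀ n, 0 < (step n (A n)).choose.2 ∧
      (A (n+1)).N = (A n).N * (step n (A n)).choose.2 ∧
      ∀ k, dist ((A (n+1)).c k) ((A n).c (k / (step n (A n)).choose.2)) ≤ ε n :=
    fun n => (step n (A n)).choose_spec
  set u : ℕ → ℝ → M := fun n t => (A n).c ⌊t * (A n).N⌋₊ with hu
  -- successive distance estimate
  have hstepdist : ∀ n t, dist (u n t) (u (n+1) t) ≤ ε n := by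
    intro n t
    obtain ⟨hm, hN, hpar⟩ := hspec n
    set m := (step n (A n)).choose.2 with hmdef
    have hm' : (m : ℝ) ≠ 0 := Nat.cast_ne_zero.mpr hm.ne'
    have hfloor : ⌊t * ((A (n+1)).N : ℝ)⌋₊ / m = ⌊t * ((A n).N : ℝ)⌋₊ := by
      rw [hN, ← Nat.floor_div_natCast]
      congr 1
      push_cast
      field_simp
    have := hpar ⌊t * ((A (n+1)).N : ℝ)⌋₊
    rw [hfloor] at this
    rw [dist_comm]
    exact this
  -- Cauchy; limit function
  have hgeo : ∀ t, ∀ k : ℕ, dist (u k t) (u (k+1) t) ≤ K / 2 / 2 ^ k := fun t k => hstepdist k t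
  have hcau : ∀ t : ℝ, ∃ L, Tendsto (fun n => u n t) atTop (𝓝 L) := fun t =>
    cauchySeq_tendsto_of_complete (cauchySeq_of_le_geometric_two (hgeo t))
  choose γ hγ using hcau
  have hlim : ∀ t n, dist (u n t) (γ t) ≤ K / 2 ^ n := fun t n =>
    dist_le_of_le_geometric_two_of_tendsto (hgeo t) (hγ t) n
  -- adjacency estimate
  have hadj : ∀ n, ∀ s t : ℝ, 0 ≤ s → s ≤ t → t * (A n).N ≤ s * (A n).N + 1 →
      dist (u n s) (u n t) ≤ ε n := by
    intro n s t hs hst hd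
    have hsN : 0 ≤ s * ((A n).N : ℝ) := mul_nonneg hs (Nat.cast_nonneg _)
    have h1 : ⌊s * ((A n).N : ℝ)⌋₊ ≤ ⌊t * ((A n).N : ℝ)⌋₊ :=
      Nat.floor_le_floor (by nlinarith [Nat.cast_nonneg (α := ℝ) (A n).N])
    have h2 : ⌊t * ((A n).N : ℝ)⌋₊ ≤ ⌊s * ((A n).N : ℝ)⌋₊ + 1 := by
      calc ⌊t * ((A n).N : ℝ)⌋₊ ≤ ⌊s * ((A n).N : ℝ) + 1⌋₊ := Nat.floor_le_floor hd
        _ = ⌊s * ((A n).N : ℝ)⌋₊ + 1 := by rw [Nat.floor_add_one hsN]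
    rcases eq_or_lt_of_le h1 with he | hlt
    · show dist ((A n).c _) ((A n).c _) ≤ ε n
      rw [← he, dist_self]
      exact (hεpos n).le
    · have he : ⌊t * ((A n).N : ℝ)⌋₊ = ⌊s * ((A n).N : ℝ)⌋₊ + 1 := by omega
      show dist ((A n).c _) ((A n).c _) ≤ ε n
      rw [he]
      exact (A n).dist_succ _
  -- endpoints
  have hγ0 : γ 0 = x := by
    have h1 : Tendsto (fun n : ℕ => u n 0) atTop (𝓝 x) := by
      have : ∀ n : ℕ, u n 0 = x := fun n => by simp [hu, (A n).c0]
      simpa [this] using tendsto_const_nhds (α := ℕ) (x := x) (f := atTop)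
    exact tendsto_nhds_unique (hγ 0) h1
  have hγ1 : γ 1 = y := by
    have h1 : Tendsto (fun n : ℕ => u n 1) atTop (𝓝 y) := by
      have : ∀ n : ℕ, u n 1 = y := fun n => by
        simp only [hu, one_mul, Nat.floor_natCast]
        exact (A n).ctail _ le_rfl
      simpa [this] using tendsto_const_nhds (α := ℕ) (x := y) (f := atTop)
    exact tendsto_nhds_unique (hγ 1) h1
  -- continuity on the unit interval
  have hcont : Continuous fun t : unitInterval => γ (t : ℝ) := by
    rw [Metric.continuous_iff]
    intro b ε0 hε0
    obtain ⟨n, hn⟩ : ∃ n : ℕ, 5 * (K / 2 ^ n) < ε0 := by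
      obtain ⟨n, hn⟩ := pow_unbounded_of_one_lt (5 * K / ε0) (by norm_num : (1:ℝ) < 2)
      refine ⟨n, ?_⟩
      have h2 : (0:ℝ) < 2 ^ n := by positivity
      rw [div_lt_iff₀ hε0] at hn
      rw [show 5 * (K / 2 ^ n) = 5 * K / 2 ^ n from by ring, div_lt_iff₀ h2]
      linarith [hn]
    have hNpos : (0:ℝ) < ((A n).N : ℝ) := by exact_mod_cast (A n).Npos
    refine ⟨1 / ((A n).N : ℝ), by positivity, fun a hab => ?_⟩
    -- the middle estimate
    have hmid : dist (u n (a : ℝ)) (u n (b : ℝ)) ≤ ε n := by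
      have habs : |((a : ℝ)) - ((b : ℝ))| < 1 / ((A n).N : ℝ) := by
        rw [Subtype.dist_eq, Real.dist_eq] at hab
        exact hab
      rcases le_total ((a : ℝ)) ((b : ℝ)) with hle | hle
      · refine hadj n _ _ a.2.1 hle ?_
        have h5 : ((b : ℝ)) - ((a : ℝ)) < 1 / ((A n).N : ℝ) := by
          rw [abs_lt] at habs; linarith [habs.1]
        have h6 := mul_lt_mul_of_pos_right h5 hNpos
        rw [one_div, inv_mul_cancel₀ hNpos.ne', sub_mul] at h6
        linarith
      · rw [dist_comm]
        refine hadj n _ _ b.2.1 hle ?_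
        have h5 : ((a : ℝ)) - ((b : ℝ)) < 1 / ((A n).N : ℝ) := by
          rw [abs_lt] at habs; linarith [habs.2]
        have h6 := mul_lt_mul_of_pos_right h5 hNpos
        rw [one_div, inv_mul_cancel₀ hNpos.ne', sub_mul] at h6
        linarith
    have h1 := hlim (a : ℝ) n
    have h2 := hlim (b : ℝ) n
    have hεK : ε n ≤ K / 2 ^ n := by
      have e : ε n = K / 2 ^ n / 2 := by simp only [hε]; ring
      have h4 : (0:ℝ) ≤ K / 2 ^ n := by positivity
      rw [e]; linarith
    calc dist (γ (a : ℝ)) (γ (b : ℝ))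
        ≤ dist (γ (a : ℝ)) (u n (a : ℝ)) + dist (u n (a : ℝ)) (u n (b : ℝ))
          + dist (u n (b : ℝ)) (γ (b : ℝ)) := dist_triangle4 _ _ _ _
      _ ≤ K / 2 ^ n + ε n + K / 2 ^ n := by
          rw [dist_comm (γ (a : ℝ))]
          exact add_le_add (add_le_add h1 hmid) h2
      _ < ε0 := by
          have h4 : (0:ℝ) ≤ K / 2 ^ n := by positivity
          linarith [hεK, hn]
  exact ⟨⟨⟨fun t => γ (t : ℝ), hcont⟩, by simpa using hγ0, by simpa using hγ1⟩⟩



/-- A compact, connected, locally connected metrizable space is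
path connected. -/
theorem stmt_8 {M : Type*} [TopologicalSpace M] [CompactSpace M]
    [ConnectedSpace M] [LocallyConnectedSpace M]
    [TopologicalSpace.MetrizableSpace M] :
    PathConnectedSpace M := by
  letI : MetricSpace M := TopologicalSpace.metrizableSpaceMetric M
  exact peano_key
end

section
/- Let X be a proper CAT(0) space, Y ⊆ X a closed convex subset, x₀ ∈ X, and let (rᵢ) be geodesic rays based at x₀ converging (uniformly on compacta) to a geodesic ray r based at x₀. If each rᵢ intersects Y, then either r intersects Y or r is asymptotic to a geodesic ray contained in Y (i.e., r(∞) lies in the boundary of Y). -/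
/-- A geodesic ray based at `r 0`, parametrized by `[0,∞)` (values for negative
times are irrelevant). -/
def IsGeodesicRay {X : Type*} [MetricSpace X] (r : ℝ → X) : Prop :=
  ∀ s t : ℝ, 0 ≤ s → 0 ≤ t → dist (r s) (r t) = |s - t|

/-- Two rays are asymptotic if they stay at bounded distance. -/
def AsymptoticRays {X : Type*} [MetricSpace X] (r r' : ℝ → X) : Prop :=
  ∃ C : ℝ, ∀ t : ℝ, 0 ≤ t → dist (r t) (r' t) ≤ C

/-- Every pair of points is joined by a geodesic. -/
def GeodesicSpace (X : Type*) [MetricSpace X] : Prop :=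
  ∀ x y : X, ∃ g : ℝ → X, g 0 = x ∧ g (dist x y) = y ∧
    ∀ s ∈ Set.Icc 0 (dist x y), ∀ t ∈ Set.Icc 0 (dist x y), dist (g s) (g t) = |s - t|

/-- CAT(0): a geodesic space satisfying the CN (Bruhat–Tits) inequality. -/
def CAT0 (X : Type*) [MetricSpace X] : Prop :=
  GeodesicSpace X ∧ ∀ x y m z : X, dist x m = dist x y / 2 → dist y m = dist x y / 2 →
    dist z m ^ 2 ≤ (dist z x ^ 2 + dist z y ^ 2) / 2 - dist x y ^ 2 / 4

/-- A subset is (geodesically) convex if it contains every point lying on a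
geodesic between two of its points. -/
def MetricConvex {X : Type*} [MetricSpace X] (S : Set X) : Prop :=
  ∀ x ∈ S, ∀ y ∈ S, ∀ z : X, dist x z + dist z y = dist x y → z ∈ S

lemma midpoint_comparison {X : Type*} [MetricSpace X]
    (hCN : ∀ x y m z : X, dist x m = dist x y / 2 → dist y m = dist x y / 2 →
      dist z m ^ 2 ≤ (dist z x ^ 2 + dist z y ^ 2) / 2 - dist x y ^ 2 / 4)
    (z x y m m' : X)
    (h1 : dist z m = dist z x / 2) (h2 : dist x m = dist z x / 2)
    (h3 : dist z m' = dist z y / 2) (h4 : dist y m' = dist z y / 2) :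
    dist m m' ≤ dist x y / 2 := by
  have A := hCN z x m y h1 h2
  have B := hCN z y m' m h3 h4
  have e1 : dist m z = dist z m := dist_comm _ _
  have e2 : dist m y = dist y m := dist_comm _ _
  have e3 : dist y z = dist z y := dist_comm _ _
  have e4 : dist y x = dist x y := dist_comm _ _
  have hs : dist m m' ^ 2 ≤ (dist x y / 2) ^ 2 := by
    rw [e1, e2, h1] at B
    rw [e3, e4] at A
    nlinarith [A, B]
  nlinarith [dist_nonneg (x := m) (y := m'), dist_nonneg (x := x) (y := y)]

lemma midpoint_dist_le {X : Type*} [MetricSpace X] (hX : CAT0 X)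
    (p q p' q' m m' : X)
    (h1 : dist p m = dist p q / 2) (h2 : dist q m = dist p q / 2)
    (h3 : dist p' m' = dist p' q' / 2) (h4 : dist q' m' = dist p' q' / 2) :
    dist m m' ≤ (dist p p' + dist q q') / 2 := by
  obtain ⟨g, hg0, hgL, hgiso⟩ := hX.1 p q'
  set L := dist p q' with hLdef
  have hL : 0 ≤ L := dist_nonneg
  set n := g (L / 2) with hndef
  have hn1 : dist p n = L / 2 := by
    rw [← hg0, hndef, hgiso 0 ⟨le_refl 0, hL⟩ (L/2) ⟨by linarith, by linarith⟩]
    rw [abs_of_nonpos (by linarith)]; ring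
  have hn2 : dist q' n = L / 2 := by
    rw [← hgL, hndef, hgiso L ⟨hL, le_refl L⟩ (L/2) ⟨by linarith, by linarith⟩]
    rw [abs_of_nonneg (by linarith)]; ring
  have step1 : dist m n ≤ dist q q' / 2 :=
    midpoint_comparison hX.2 p q q' m n h1 h2 hn1 hn2
  have step2 : dist n m' ≤ dist p p' / 2 := by
    have h3' : dist q' m' = dist q' p' / 2 := by rw [dist_comm q' p']; exact h4
    have h4' : dist p' m' = dist q' p' / 2 := by rw [dist_comm q' p']; exact h3
    have hn1' : dist q' n = dist q' p / 2 := by rw [dist_comm q' p, ← hLdef]; exact hn2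
    have hn2' : dist p n = dist q' p / 2 := by rw [dist_comm q' p, ← hLdef]; exact hn1
    exact midpoint_comparison hX.2 q' p p' n m' hn1' hn2' h3' h4'
  calc dist m m' ≤ dist m n + dist n m' := dist_triangle _ _ _
    _ ≤ dist q q' / 2 + dist p p' / 2 := add_le_add step1 step2
    _ = (dist p p' + dist q q') / 2 := by ring

lemma geodesic_convexity {X : Type*} [MetricSpace X] (hX : CAT0 X)
    {a b : ℝ} (ha : 0 ≤ a) (hb : 0 ≤ b) (γ γ' : ℝ → X)
    (hγ : ∀ s ∈ Set.Icc 0 a, ∀ t ∈ Set.Icc 0 a, dist (γ s) (γ t) = |s - t|)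
    (hγ' : ∀ s ∈ Set.Icc 0 b, ∀ t ∈ Set.Icc 0 b, dist (γ' s) (γ' t) = |s - t|) :
    ∀ s ∈ Set.Icc (0:ℝ) 1, dist (γ (s * a)) (γ' (s * b)) ≤
      (1 - s) * dist (γ 0) (γ' 0) + s * dist (γ a) (γ' b) := by
  set f : ℝ → ℝ := fun s => dist (γ (s * a)) (γ' (s * b)) with hfdef
  set c0 : ℝ := dist (γ 0) (γ' 0) with hc0
  set c1 : ℝ := dist (γ a) (γ' b) with hc1
  set g : ℝ → ℝ := fun s => f s - ((1 - s) * c0 + s * c1) with hgdef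
  have hmem : ∀ s ∈ Set.Icc (0:ℝ) 1, s * a ∈ Set.Icc 0 a := fun s hs =>
    ⟨mul_nonneg hs.1 ha, mul_le_of_le_one_left ha hs.2⟩
  have hmem' : ∀ s ∈ Set.Icc (0:ℝ) 1, s * b ∈ Set.Icc 0 b := fun s hs =>
    ⟨mul_nonneg hs.1 hb, mul_le_of_le_one_left hb hs.2⟩
  -- midpoint inequality for f
  have key : ∀ s ∈ Set.Icc (0:ℝ) 1, ∀ t ∈ Set.Icc (0:ℝ) 1,
      f ((s + t) / 2) ≤ (f s + f t) / 2 := by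
    intro s hs t ht
    set u : ℝ := (s + t) / 2 with hu
    have hum : u ∈ Set.Icc (0:ℝ) 1 := ⟨by simp only [hu]; linarith [hs.1, ht.1],
      by simp only [hu]; linarith [hs.2, ht.2]⟩
    have e1 : dist (γ (s * a)) (γ (u * a)) = dist (γ (s * a)) (γ (t * a)) / 2 := by
      rw [hγ _ (hmem s hs) _ (hmem u hum), hγ _ (hmem s hs) _ (hmem t ht)]
      rw [← sub_mul, ← sub_mul, abs_mul, abs_mul, abs_of_nonneg ha]
      have : |s - u| = |s - t| / 2 := by
        rw [hu]; rw [show s - (s + t)/2 = (s - t)/2 by ring, abs_div]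
        simp [abs_of_nonneg]
      rw [this]; ring
    have e2 : dist (γ (t * a)) (γ (u * a)) = dist (γ (s * a)) (γ (t * a)) / 2 := by
      rw [hγ _ (hmem t ht) _ (hmem u hum), hγ _ (hmem s hs) _ (hmem t ht)]
      rw [← sub_mul, ← sub_mul, abs_mul, abs_mul, abs_of_nonneg ha]
      have : |t - u| = |s - t| / 2 := by
        rw [hu]; rw [show t - (s + t)/2 = -((s - t)/2) by ring, abs_neg, abs_div]
        simp [abs_of_nonneg]
      rw [this]; ring
    have e1' : dist (γ' (s * b)) (γ' (u * b)) = dist (γ' (s * b)) (γ' (t * b)) / 2 := by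
      rw [hγ' _ (hmem' s hs) _ (hmem' u hum), hγ' _ (hmem' s hs) _ (hmem' t ht)]
      rw [← sub_mul, ← sub_mul, abs_mul, abs_mul, abs_of_nonneg hb]
      have : |s - u| = |s - t| / 2 := by
        rw [hu]; rw [show s - (s + t)/2 = (s - t)/2 by ring, abs_div]
        simp [abs_of_nonneg]
      rw [this]; ring
    have e2' : dist (γ' (t * b)) (γ' (u * b)) = dist (γ' (s * b)) (γ' (t * b)) / 2 := by
      rw [hγ' _ (hmem' t ht) _ (hmem' u hum), hγ' _ (hmem' s hs) _ (hmem' t ht)]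
      rw [← sub_mul, ← sub_mul, abs_mul, abs_mul, abs_of_nonneg hb]
      have : |t - u| = |s - t| / 2 := by
        rw [hu]; rw [show t - (s + t)/2 = -((s - t)/2) by ring, abs_neg, abs_div]
        simp [abs_of_nonneg]
      rw [this]; ring
    have := midpoint_dist_le hX (γ (s * a)) (γ (t * a)) (γ' (s * b)) (γ' (t * b))
      (γ (u * a)) (γ' (u * b)) e1 e2 e1' e2'
    simpa [hfdef] using this
  -- continuity on Icc 0 1
  have hlip : ∀ s ∈ Set.Icc (0:ℝ) 1, ∀ t ∈ Set.Icc (0:ℝ) 1,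
      |f s - f t| ≤ |s - t| * (a + b) := by
    intro s hs t ht
    have h1 : dist (f s) (f t) ≤ dist (γ (s*a)) (γ (t*a)) + dist (γ' (s*b)) (γ' (t*b)) :=
      dist_dist_dist_le _ _ _ _
    rw [hγ _ (hmem s hs) _ (hmem t ht), hγ' _ (hmem' s hs) _ (hmem' t ht)] at h1
    rw [Real.dist_eq] at h1
    calc |f s - f t| ≤ |s*a - t*a| + |s*b - t*b| := h1
      _ = |s - t| * (a + b) := by
        rw [← sub_mul, ← sub_mul, abs_mul, abs_mul, abs_of_nonneg ha, abs_of_nonneg hb]; ring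
  have hfcont : ContinuousOn f (Set.Icc (0:ℝ) 1) := by
    rw [Metric.continuousOn_iff]
    intro x hx ε hε
    refine ⟨ε / (a + b + 1), by positivity, fun y hy hd => ?_⟩
    rw [Real.dist_eq]
    calc |f y - f x| ≤ |y - x| * (a + b) := hlip y hy x hx
      _ ≤ (ε / (a + b + 1)) * (a + b) := by
          apply mul_le_mul_of_nonneg_right _ (by linarith)
          rw [Real.dist_eq] at hd; linarith
      _ < ε := by
          rw [div_mul_eq_mul_div, div_lt_iff₀ (by linarith)]
          nlinarith
  have hgcont : ContinuousOn g (Set.Icc (0:ℝ) 1) := by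
    apply hfcont.sub
    exact (Continuous.continuousOn (by continuity))
  obtain ⟨sm, hsm, hmax⟩ := isCompact_Icc.exists_isMaxOn (Set.nonempty_Icc.2 zero_le_one) hgcont
  have hmax' : ∀ x ∈ Set.Icc (0:ℝ) 1, g x ≤ g sm := hmax
  have hg0 : g 0 = 0 := by simp [hgdef, hfdef, hc0]
  have hg1 : g 1 = 0 := by simp [hgdef, hfdef, hc1]
  have gkey : ∀ s ∈ Set.Icc (0:ℝ) 1, ∀ t ∈ Set.Icc (0:ℝ) 1,
      g ((s + t) / 2) ≤ (g s + g t) / 2 := by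
    intro s hs t ht
    have := key s hs t ht
    simp only [hgdef]
    have : f ((s+t)/2) ≤ (f s + f t)/2 := key s hs t ht
    ring_nf
    ring_nf at this
    linarith
  have hgsm : g sm ≤ 0 := by
    clear_value g f c0 c1
    rcases le_or_gt sm (1/2) with h | h
    · have ht : (2 * sm) ∈ Set.Icc (0:ℝ) 1 := ⟨by linarith [hsm.1], by linarith⟩
      have := gkey 0 ⟨le_refl 0, zero_le_one⟩ (2 * sm) ht
      rw [show (0 + 2 * sm) / 2 = sm by ring, hg0] at this
      have h2 := hmax' _ ht
      linarith
    · have ht : (2 * sm - 1) ∈ Set.Icc (0:ℝ) 1 := ⟨by linarith, by linarith [hsm.2]⟩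
      have := gkey (2 * sm - 1) ht 1 ⟨zero_le_one, le_refl 1⟩
      rw [show (2 * sm - 1 + 1) / 2 = sm by ring, hg1] at this
      have h2 := hmax' _ ht
      linarith
  intro s hs
  have := hmax' s hs
  have : g s ≤ 0 := le_trans this hgsm
  simp only [hgdef] at this
  linarith


/-- In a proper CAT(0) space, if geodesic rays `rᵢ` based at `x₀`
converge uniformly on compacta to a geodesic ray `r` based at `x₀` and every
`rᵢ` meets the closed convex set `Y`, then either `r` meets `Y` or `r` is
asymptotic to a geodesic ray contained in `Y` (i.e. `r(∞) ∈ ∂Y`). -/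
theorem stmt_9 {X : Type*} [MetricSpace X] [ProperSpace X] (hX : CAT0 X)
    (Y : Set X) (hYcl : IsClosed Y) (hYconv : MetricConvex Y)
    (x₀ : X) (r : ℝ → X) (ri : ℕ → ℝ → X)
    (hr : IsGeodesicRay r) (hr0 : r 0 = x₀)
    (hri : ∀ i, IsGeodesicRay (ri i) ∧ ri i 0 = x₀)
    (hconv : ∀ T > (0:ℝ), ∀ ε > (0:ℝ), ∃ N : ℕ, ∀ n ≥ N,
      ∀ t ∈ Set.Icc (0:ℝ) T, dist (ri n t) (r t) ≤ ε)
    (hint : ∀ i, ∃ t ≥ (0:ℝ), ri i t ∈ Y) :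
    (∃ t ≥ (0:ℝ), r t ∈ Y) ∨
      ∃ ρ : ℝ → X, IsGeodesicRay ρ ∧ (∀ t ≥ (0:ℝ), ρ t ∈ Y) ∧ AsymptoticRays r ρ := by
  classical
  have htn' : ∀ n : ℕ, ∃ t, 0 ≤ t ∧ ri n t ∈ Y := by
    intro n; obtain ⟨t, ht, hm⟩ := hint n; exact ⟨t, ht, hm⟩
  choose tn htn0 htnY using htn'
  have hray : ∀ n, IsGeodesicRay (ri n) := fun n => (hri n).1
  have hbase : ∀ n, ri n 0 = x₀ := fun n => (hri n).2
  have hdist : ∀ n, dist x₀ (ri n (tn n)) = tn n := by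
    intro n
    have h := hray n 0 (tn n) le_rfl (htn0 n)
    rw [hbase n] at h
    rw [h, abs_of_nonpos (by linarith [htn0 n])]; ring
  by_cases hbdd : ∃ M : ℝ, ∃ᶠ n in Filter.atTop, tn n ≤ M
  · -- Case 1 : a subsequence of the hitting times is bounded
    left
    obtain ⟨M, hM⟩ := hbdd
    have hne : (Filter.atTop ⊓ Filter.principal {n | tn n ≤ M}).NeBot :=
      Filter.frequently_iff_neBot.1 hM
    set U : Ultrafilter ℕ := Ultrafilter.of (Filter.atTop ⊓ Filter.principal {n | tn n ≤ M})
      with hUdef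
    have hUle : (U : Filter ℕ) ≤ Filter.atTop ⊓ Filter.principal {n | tn n ≤ M} :=
      Ultrafilter.of_le _
    have hUatTop : (U : Filter ℕ) ≤ Filter.atTop := hUle.trans inf_le_left
    have hUM : ∀ᶠ n in (U : Filter ℕ), tn n ≤ M :=
      hUle (Filter.mem_inf_of_right (Filter.mem_principal_self _))
    have hmemIcc : ∀ᶠ n in (U : Filter ℕ), tn n ∈ Set.Icc (0:ℝ) (max M 0) :=
      hUM.mono fun n h => ⟨htn0 n, le_trans h (le_max_left _ _)⟩
    obtain ⟨t₀, ht₀mem, ht₀⟩ :=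
      (isCompact_Icc (a := (0:ℝ)) (b := max M 0)).ultrafilter_le_nhds (U.map tn)
        (Filter.le_principal_iff.2 hmemIcc)
    have htt : Filter.Tendsto tn (U : Filter ℕ) (nhds t₀) := ht₀
    refine ⟨t₀, ht₀mem.1, ?_⟩
    have hten : Filter.Tendsto (fun n => ri n (tn n)) (U : Filter ℕ) (nhds (r t₀)) := by
      rw [Metric.tendsto_nhds]
      intro ε hε
      obtain ⟨N, hN⟩ := hconv (max M 0 + 1) (by positivity) (ε/3) (by positivity)
      have E1 : ∀ᶠ n in (U : Filter ℕ), N ≤ n := hUatTop (Filter.eventually_ge_atTop N)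
      have E3 : ∀ᶠ n in (U : Filter ℕ), dist (tn n) t₀ < ε/3 :=
        htt (Metric.ball_mem_nhds t₀ (by positivity))
      filter_upwards [E1, E3, hmemIcc] with n h1 h3 hm
      have hb1 : dist (ri n (tn n)) (r (tn n)) ≤ ε/3 :=
        hN n h1 (tn n) ⟨hm.1, by linarith [hm.2]⟩
      have hb2 : dist (r (tn n)) (r t₀) = |tn n - t₀| := hr (tn n) t₀ (htn0 n) ht₀mem.1
      have hb3 : |tn n - t₀| < ε/3 := by rwa [Real.dist_eq] at h3
      calc dist (ri n (tn n)) (r t₀) ≤ dist (ri n (tn n)) (r (tn n)) + dist (r (tn n)) (r t₀) :=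
            dist_triangle _ _ _
        _ < ε := by rw [hb2]; linarith
    exact hYcl.mem_of_tendsto hten (Filter.Eventually.of_forall fun n => htnY n)
  · -- Case 2 : the hitting times tend to infinity
    right
    push_neg at hbdd
    have htends : ∀ M : ℝ, ∀ᶠ n in Filter.atTop, M < tn n := by
      intro M
      exact hbdd M
    set p : X := ri 0 (tn 0) with hpdef
    have hp : p ∈ Y := htnY 0
    set D : ℝ := dist x₀ p with hDdef
    have hD : 0 ≤ D := dist_nonneg
    choose gg hg0 hgL hgiso using fun n => hX.1 p (ri n (tn n))
    set L : ℕ → ℝ := fun n => dist p (ri n (tn n)) with hLdef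
    have hL : ∀ n, 0 ≤ L n := fun n => dist_nonneg
    have hLtn : ∀ n, |L n - tn n| ≤ D := by
      intro n
      have := abs_dist_sub_le p x₀ (ri n (tn n))
      rw [hdist n, dist_comm p x₀, ← hDdef] at this
      exact this
    set hh : ℕ → ℝ → X := fun n t => gg n (max 0 (min t (L n))) with hhdef
    have harg : ∀ n t, max 0 (min t (L n)) ∈ Set.Icc 0 (L n) := fun n t =>
      ⟨le_max_left _ _, max_le (hL n) (min_le_right _ _)⟩
    have hdistp : ∀ n t, dist p (hh n t) = max 0 (min t (L n)) := by
      intro n t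
      rw [hhdef]
      simp only
      rw [← hg0 n, hgiso n 0 ⟨le_refl 0, hL n⟩ _ (harg n t)]
      rw [abs_of_nonpos (by linarith [(harg n t).1])]; ring
    have hInY : ∀ n t, hh n t ∈ Y := by
      intro n t
      apply hYconv p hp (ri n (tn n)) (htnY n)
      have h1 : dist p (hh n t) = max 0 (min t (L n)) := hdistp n t
      have h2 : dist (hh n t) (ri n (tn n)) = L n - max 0 (min t (L n)) := by
        rw [hhdef]; simp only
        rw [← hgL n, hgiso n _ (harg n t) (L n) ⟨hL n, le_refl _⟩]
        rw [abs_of_nonpos (by linarith [(harg n t).2])]; ring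
      rw [h1, h2]
      have hLn : L n = dist p (ri n (tn n)) := rfl
      rw [← hLn]; ring
    have hball : ∀ n t, hh n t ∈ Metric.closedBall x₀ (D + max t 0) := by
      intro n t
      rw [Metric.mem_closedBall]
      calc dist (hh n t) x₀ ≤ dist (hh n t) p + dist p x₀ := dist_triangle _ _ _
        _ ≤ max t 0 + D := by
            rw [dist_comm (hh n t) p, hdistp n t, dist_comm p x₀, ← hDdef]
            have : max 0 (min t (L n)) ≤ max t 0 := by
              apply max_le (le_max_right _ _)
              exact le_trans (min_le_left _ _) (le_max_left _ _)
            linarith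
        _ = D + max t 0 := by ring
    set U : Ultrafilter ℕ := Ultrafilter.of Filter.atTop with hUdef
    have hUle : (U : Filter ℕ) ≤ Filter.atTop := Ultrafilter.of_le _
    have hex : ∀ t : ℝ, ∃ x, Filter.Tendsto (fun n => hh n t) (U : Filter ℕ) (nhds x) := by
      intro t
      obtain ⟨x, _, hx⟩ := (isCompact_closedBall x₀ (D + max t 0)).ultrafilter_le_nhds
        (U.map (fun n => hh n t))
        (Filter.le_principal_iff.2 (Filter.mem_map.2 (Filter.Eventually.of_forall fun n => hball n t)))
      exact ⟨x, hx⟩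
    choose ρ hρ using hex
    -- eventually L n is large
    have hLbig : ∀ c : ℝ, ∀ᶠ n in Filter.atTop, c ≤ L n := by
      intro c
      filter_upwards [htends (c + D)] with n hn
      have := hLtn n
      rw [abs_le] at this
      linarith [this.1]
    have hh_eq : ∀ (t : ℝ), 0 ≤ t → ∀ n, t ≤ L n → hh n t = gg n t := by
      intro t ht n hn
      rw [hhdef]; simp only
      rw [min_eq_left hn, max_eq_right ht]
    refine ⟨ρ, ?_, ?_, ?_⟩
    · -- geodesic ray
      intro s t hs ht
      have hd : Filter.Tendsto (fun n => dist (hh n s) (hh n t)) (U : Filter ℕ)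
          (nhds (dist (ρ s) (ρ t))) := (hρ s).dist (hρ t)
      have hev : ∀ᶠ n in (U : Filter ℕ), dist (hh n s) (hh n t) = |s - t| := by
        apply hUle
        filter_upwards [hLbig (max s t)] with n hn
        rw [hh_eq s hs n (le_trans (le_max_left _ _) hn),
          hh_eq t ht n (le_trans (le_max_right _ _) hn)]
        exact hgiso n s ⟨hs, le_trans (le_max_left _ _) hn⟩ t ⟨ht, le_trans (le_max_right _ _) hn⟩
      have hd' : Filter.Tendsto (fun n => dist (hh n s) (hh n t)) (U : Filter ℕ)
          (nhds (|s - t|)) := Filter.Tendsto.congr' (by filter_upwards [hev] with n h; exact h.symm)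
            tendsto_const_nhds
      exact tendsto_nhds_unique hd hd'
    · -- contained in Y
      intro t _
      exact hYcl.mem_of_tendsto (hρ t) (Filter.Eventually.of_forall fun n => hInY n t)
    · -- asymptotic
      refine ⟨2 * D + 1, fun t ht => ?_⟩
      obtain ⟨N, hN⟩ := hconv (t + 1) (by linarith) 1 one_pos
      have hev : ∀ᶠ n in (U : Filter ℕ), dist (r t) (hh n t) ≤ 2 * D + 1 := by
        apply hUle
        filter_upwards [htends (t + D + 1), Filter.eventually_ge_atTop N] with n hn hNn
        have htn_pos : 0 < tn n := by linarith
        have htL : t ≤ L n := by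
          have := hLtn n; rw [abs_le] at this; linarith [this.1]
        have httn : t ≤ tn n := by linarith
        -- key comparison bound
        have hkey : dist (ri n t) (gg n t) ≤ 2 * D := by
          set s : ℝ := 1 - t / tn n with hsdef
          have hs01 : s ∈ Set.Icc (0:ℝ) 1 := by
            constructor
            · rw [hsdef]; have : t / tn n ≤ 1 := (div_le_one htn_pos).2 httn; linarith
            · rw [hsdef]; have : 0 ≤ t / tn n := div_nonneg ht (le_of_lt htn_pos); linarith
          have hγ : ∀ u ∈ Set.Icc 0 (tn n), ∀ v ∈ Set.Icc 0 (tn n),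
              dist (ri n (tn n - u)) (ri n (tn n - v)) = |u - v| := by
            intro u hu v hv
            rw [hray n (tn n - u) (tn n - v) (by linarith [hu.2]) (by linarith [hv.2])]
            rw [show tn n - u - (tn n - v) = v - u by ring, abs_sub_comm]
          have hγ' : ∀ u ∈ Set.Icc 0 (L n), ∀ v ∈ Set.Icc 0 (L n),
              dist (gg n (L n - u)) (gg n (L n - v)) = |u - v| := by
            intro u hu v hv
            rw [hgiso n (L n - u) ⟨by linarith [hu.2], by linarith [hu.1]⟩
              (L n - v) ⟨by linarith [hv.2], by linarith [hv.1]⟩]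
            rw [show L n - u - (L n - v) = v - u by ring, abs_sub_comm]
          have hconvex := geodesic_convexity hX (le_of_lt htn_pos) (hL n)
            (fun u => ri n (tn n - u)) (fun u => gg n (L n - u)) hγ hγ' s hs01
          have e0 : tn n - 0 = tn n := by ring
          have e1 : L n - 0 = L n := by ring
          have e2 : tn n - tn n = 0 := by ring
          have e3 : L n - L n = 0 := by ring
          rw [e0, e1, e2, e3, hgL n, hbase n, hg0 n] at hconvex
          have e4 : tn n - s * tn n = t := by
            rw [hsdef]; field_simp; ring
          have e5 : L n - s * L n = t / tn n * L n := by
            rw [hsdef]; ring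
          rw [e4, e5] at hconvex
          have hzero : dist (ri n (tn n)) (ri n (tn n)) = 0 := dist_self _
          rw [hzero, ← hDdef] at hconvex
          have hb1 : dist (ri n t) (gg n (t / tn n * L n)) ≤ D := by
            have hsle : s ≤ 1 := hs01.2
            calc dist (ri n t) (gg n (t / tn n * L n)) ≤ (1 - s) * 0 + s * D := hconvex
              _ = s * D := by ring
              _ ≤ 1 * D := mul_le_mul_of_nonneg_right hsle hD
              _ = D := one_mul D
          have hb2 : dist (gg n (t / tn n * L n)) (gg n t) ≤ D := by
            have hq : t / tn n * L n ∈ Set.Icc 0 (L n) := by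
              constructor
              · exact mul_nonneg (div_nonneg ht (le_of_lt htn_pos)) (hL n)
              · exact mul_le_of_le_one_left (hL n) ((div_le_one htn_pos).2 httn)
            rw [hgiso n _ hq t ⟨ht, htL⟩]
            have : t / tn n * L n - t = (t / tn n) * (L n - tn n) := by
              field_simp
            rw [this, abs_mul]
            have h1 : |t / tn n| ≤ 1 := by
              rw [abs_of_nonneg (div_nonneg ht (le_of_lt htn_pos))]
              exact (div_le_one htn_pos).2 httn
            calc |t / tn n| * |L n - tn n| ≤ 1 * D :=
                  mul_le_mul h1 (hLtn n) (abs_nonneg _) zero_le_one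
              _ = D := one_mul D
          calc dist (ri n t) (gg n t) ≤ dist (ri n t) (gg n (t / tn n * L n))
                + dist (gg n (t / tn n * L n)) (gg n t) := dist_triangle _ _ _
            _ ≤ D + D := add_le_add hb1 hb2
            _ = 2 * D := by ring
        have hh_t : hh n t = gg n t := hh_eq t ht n htL
        have hb0 : dist (r t) (ri n t) ≤ 1 := by
          rw [dist_comm]
          exact hN n hNn t ⟨ht, by linarith⟩
        calc dist (r t) (hh n t) ≤ dist (r t) (ri n t) + dist (ri n t) (hh n t) :=
              dist_triangle _ _ _
          _ ≤ 1 + 2 * D := by rw [hh_t]; exact add_le_add hb0 hkey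
          _ = 2 * D + 1 := by ring
      exact le_of_tendsto (Filter.Tendsto.dist tendsto_const_nhds (hρ t)) hev
end

section
/- Let X be a CAT(0) space, F a closed convex subset, and q : [0,∞) → X a geodesic ray with the property that q(0) is the nearest point of F to q(t) for all t. Let x₀ ∈ F, let c be the geodesic ray based at x₀ asymptotic to q, and suppose c lies in the κ-neighborhood of q ∪ F. Then d(c(t), q(0)) ≤ 6κ, where t = d(x₀, q(0)). -/
/-- In a CAT(0) space with `F` closed and convex, `q` a geodesic
ray orthogonal to `F`, `x₀ ∈ F`, and `c` the geodesic ray based at `x₀`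
asymptotic to `q`, if `c` lies in the `κ`-neighborhood of `q ∪ F` then
`d(c(t), q(0)) ≤ 6κ` where `t = d(x₀, q(0))`. -/
theorem stmt_12 {X : Type*} [MetricSpace X] (hX : CAT0 X)
    (F : Set X) (hFcl : IsClosed F) (hFconv : MetricConvex F)
    (κ : ℝ) (hκ : 0 < κ)
    (q : ℝ → X) (hq : IsGeodesicRay q) (hq0 : q 0 ∈ F)
    (horth : ∀ t ≥ (0:ℝ), ∀ y ∈ F, dist (q t) (q 0) ≤ dist (q t) y)
    (x₀ : X) (hx₀ : x₀ ∈ F)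
    (c : ℝ → X) (hc : IsGeodesicRay c) (hc0 : c 0 = x₀)
    (hasym : AsymptoticRays c q)
    (hnbhd : ∀ t ≥ (0:ℝ), ∃ z : X,
      (z ∈ F ∨ ∃ s ≥ (0:ℝ), z = q s) ∧ dist (c t) z ≤ κ) :
    dist (c (dist x₀ (q 0))) (q 0) ≤ 6 * κ := by
  classical
  obtain ⟨C, hC⟩ := hasym
  have hC0 : 0 ≤ C := le_trans dist_nonneg (hC 0 le_rfl)
  set Q : Set X := q '' Set.Ici 0 with hQ
  have hQne : Q.Nonempty := ⟨q 0, Set.mem_image_of_mem q (Set.mem_Ici.2 le_rfl)⟩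
  have hFne : F.Nonempty := ⟨x₀, hx₀⟩
  set t₁ : ℝ := 2 * C + 1 with ht₁
  have ht₁0 : (0:ℝ) ≤ t₁ := by positivity
  -- c is continuous on [0, t₁]
  have hccont : ContinuousOn c (Set.Icc 0 t₁) := by
    have : LipschitzOnWith 1 c (Set.Icc 0 t₁) := by
      apply LipschitzOnWith.of_dist_le_mul
      intro x hx y hy
      rw [hc x y hx.1 hy.1, Real.dist_eq]
      simp
    exact this.continuousOn
  -- the comparison function
  set g : ℝ → ℝ := fun t => Metric.infDist (c t) F - Metric.infDist (c t) Q with hg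
  have hgcont : ContinuousOn g (Set.Icc 0 t₁) := by
    exact ((Metric.continuous_infDist_pt F).comp_continuousOn hccont).sub
      ((Metric.continuous_infDist_pt Q).comp_continuousOn hccont)
  have hg0 : g 0 ≤ 0 := by
    have h1 : Metric.infDist (c 0) F = 0 := by
      rw [hc0]
      exact Metric.infDist_zero_of_mem hx₀
    have h2 : 0 ≤ Metric.infDist (c 0) Q := Metric.infDist_nonneg
    simp only [hg, h1]
    linarith
  have hgt1 : 0 ≤ g t₁ := by
    have h1 : t₁ - C ≤ Metric.infDist (c t₁) F := by
      by_contra hcon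
      push_neg at hcon
      obtain ⟨y, hy, hlt⟩ := (Metric.infDist_lt_iff hFne).1 hcon
      have h2 : dist (q t₁) (q 0) ≤ dist (q t₁) y := horth t₁ ht₁0 y hy
      have h3 : dist (q t₁) (q 0) = t₁ := by
        rw [hq t₁ 0 ht₁0 le_rfl]
        simpa using abs_of_nonneg ht₁0
      have h4 : dist (q t₁) y ≤ dist (q t₁) (c t₁) + dist (c t₁) y := dist_triangle _ _ _
      have h5 : dist (q t₁) (c t₁) ≤ C := by rw [dist_comm]; exact hC t₁ ht₁0
      linarith
    have h6 : Metric.infDist (c t₁) Q ≤ C := by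
      refine le_trans (Metric.infDist_le_dist_of_mem ⟨t₁, ht₁0, rfl⟩) (hC t₁ ht₁0)
    simp only [hg]
    linarith
  -- intermediate value: find t* with g t* = 0
  have hIVT := intermediate_value_Icc ht₁0 hgcont
  have h0mem : (0:ℝ) ∈ Set.Icc (g 0) (g t₁) := ⟨hg0, hgt1⟩
  obtain ⟨t', ht'mem, hgt'⟩ := hIVT h0mem
  have ht'0 : 0 ≤ t' := ht'mem.1
  -- at t', both infDists are ≤ κ
  have hboth : Metric.infDist (c t') F ≤ κ ∧ Metric.infDist (c t') Q ≤ κ := by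
    obtain ⟨z, hz, hdz⟩ := hnbhd t' ht'0
    have heq : Metric.infDist (c t') F = Metric.infDist (c t') Q := by
      have : Metric.infDist (c t') F - Metric.infDist (c t') Q = 0 := hgt'
      linarith
    rcases hz with hzF | ⟨s, hs, rfl⟩
    · have h1 : Metric.infDist (c t') F ≤ κ :=
        le_trans (Metric.infDist_le_dist_of_mem hzF) hdz
      exact ⟨h1, heq ▸ h1⟩
    · have h1 : Metric.infDist (c t') Q ≤ κ :=
        le_trans (Metric.infDist_le_dist_of_mem ⟨s, hs, rfl⟩) hdz
      exact ⟨heq ▸ h1, h1⟩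
  -- conclude with an ε of room
  set T : ℝ := dist x₀ (q 0) with hT
  have hT0 : 0 ≤ T := dist_nonneg
  refine le_of_forall_pos_le_add ?_
  intro ε hε
  have hε6 : 0 < ε / 6 := by linarith
  obtain ⟨y, hyF, hy⟩ := (Metric.infDist_lt_iff hFne).1
    (lt_of_le_of_lt hboth.1 (by linarith : κ < κ + ε / 6))
  obtain ⟨z, ⟨s, hs, rfl⟩, hz⟩ := (Metric.infDist_lt_iff hQne).1
    (lt_of_le_of_lt hboth.2 (by linarith : κ < κ + ε / 6))
  have hs0 : dist (q s) (q 0) = s := by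
    rw [hq s 0 hs le_rfl]; simpa using abs_of_nonneg (Set.mem_Ici.1 hs)
  -- s ≤ 2(κ + ε/6)
  have hsle : s ≤ 2 * (κ + ε / 6) := by
    have h1 : dist (q s) (q 0) ≤ dist (q s) y := horth s hs y hyF
    have h2 : dist (q s) y ≤ dist (q s) (c t') + dist (c t') y := dist_triangle _ _ _
    rw [dist_comm (q s) (c t')] at h2
    linarith [hs0 ▸ h1]
  -- dist (c t') (q 0) ≤ 3(κ + ε/6)
  have hct' : dist (c t') (q 0) ≤ 3 * (κ + ε / 6) := by
    have h1 : dist (c t') (q 0) ≤ dist (c t') (q s) + dist (q s) (q 0) := dist_triangle _ _ _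
    rw [hs0] at h1
    linarith
  -- |T - t'| ≤ dist (c t') (q 0)
  have hTt' : |t' - T| ≤ dist (c t') (q 0) := by
    have h1 : dist (c t') (c 0) = t' := by
      rw [hc t' 0 ht'0 le_rfl]; simpa using abs_of_nonneg ht'0
    have h2 : dist (q 0) (c 0) = T := by rw [hc0, dist_comm]
    have h3 := abs_dist_sub_le (c t') (q 0) (c 0)
    rw [h1, h2] at h3
    exact h3
  have hfinal : dist (c T) (q 0) ≤ dist (c T) (c t') + dist (c t') (q 0) :=
    dist_triangle _ _ _
  have hcTt' : dist (c T) (c t') = |T - t'| := hc T t' hT0 ht'0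
  rw [abs_sub_comm] at hTt'
  rw [hcTt'] at hfinal
  linarith
end

section
/- Let X be a geodesic metric space with a block decomposition B whose nerve is a tree, with ε-condition constant ε > 0. If B and B' are blocks whose corresponding vertices in the nerve tree are at distance at least 2n, then d(B, B') ≥ 2nε in X. -/
/-- If two points in blocks `u₁, u₂` are at distance `< 2ε`, the blocks'
vertices are equal or adjacent. -/
lemma close_blocks {X V : Type*} [MetricSpace X] (hgeo : GeodesicSpace X)
    (G : SimpleGraph V) (B : V → Set X) (ε : ℝ) (hε : 0 < ε)
    (hadj : ∀ v w, v ≠ w → ((B v ∩ B w).Nonempty ↔ G.Adj v w))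
    (heps : ∀ v w, v ≠ w → ((B v ∩ B w).Nonempty ↔
      (Metric.thickening ε (B v) ∩ Metric.thickening ε (B w)).Nonempty))
    {u₁ u₂ : V} {x₁ x₂ : X} (h₁ : x₁ ∈ B u₁) (h₂ : x₂ ∈ B u₂)
    (hlt : dist x₁ x₂ < 2 * ε) : u₁ = u₂ ∨ G.Adj u₁ u₂ := by
  by_cases huv : u₁ = u₂
  · exact Or.inl huv
  · right
    obtain ⟨g, hg0, hgd, hgiso⟩ := hgeo x₁ x₂
    set d := dist x₁ x₂ with hdd
    have hd0 : 0 ≤ d := dist_nonneg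
    set m := g (d / 2) with hm
    have hmem : (d/2) ∈ Set.Icc (0:ℝ) d := ⟨by linarith, by linarith⟩
    have h0mem : (0:ℝ) ∈ Set.Icc (0:ℝ) d := ⟨le_refl _, hd0⟩
    have hdmem : d ∈ Set.Icc (0:ℝ) d := ⟨hd0, le_refl _⟩
    have hm1 : dist m x₁ < ε := by
      have := hgiso (d/2) hmem 0 h0mem
      rw [hg0] at this
      rw [this]; rw [abs_of_nonneg (by linarith)]; linarith
    have hm2 : dist m x₂ < ε := by
      have := hgiso (d/2) hmem d hdmem
      rw [hgd] at this
      rw [this]; rw [abs_of_nonpos (by linarith)]; linarith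
    have hth : (Metric.thickening ε (B u₁) ∩ Metric.thickening ε (B u₂)).Nonempty := by
      refine ⟨m, ?_, ?_⟩
      · exact Metric.mem_thickening_iff.mpr ⟨x₁, h₁, hm1⟩
      · exact Metric.mem_thickening_iff.mpr ⟨x₂, h₂, hm2⟩
    exact (hadj u₁ u₂ huv).mp ((heps u₁ u₂ huv).mpr hth)

lemma aux_main {X V : Type*} [MetricSpace X] (hgeo : GeodesicSpace X)
    (G : SimpleGraph V) (hconn : G.Connected) (B : V → Set X)
    (hcover : (⋃ v, B v) = Set.univ)
    (ε : ℝ) (hε : 0 < ε)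
    (hadj : ∀ v w, v ≠ w → ((B v ∩ B w).Nonempty ↔ G.Adj v w))
    (heps : ∀ v w, v ≠ w → ((B v ∩ B w).Nonempty ↔
      (Metric.thickening ε (B v) ∩ Metric.thickening ε (B w)).Nonempty)) :
    ∀ n : ℕ, ∀ v w : V, 2 * n ≤ G.dist v w →
      ∀ x ∈ B v, ∀ y ∈ B w, 2 * n * ε ≤ dist x y := by
  intro n
  induction n with
  | zero => intro v w _ x _ y _; simp [dist_nonneg]
  | succ n ih =>
    intro v w hd x hx y hy
    -- distance ≥ 2 in the tree
    have hd2 : 2 ≤ G.dist v w := le_trans (by omega) hd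
    have hbig : 2 * ε ≤ dist x y := by
      by_contra h
      push_neg at h
      rcases close_blocks hgeo G B ε hε hadj heps hx hy h with heq | hAdj
      · subst heq; simp [SimpleGraph.dist_self] at hd2
      · have : G.dist v w ≤ 1 := by
          simpa using SimpleGraph.dist_le hAdj.toWalk
        omega
    refine le_of_forall_pos_le_add fun δ hδ => ?_
    set δ' := min δ ε with hδ'
    have hδ'0 : 0 < δ' := lt_min hδ hε
    have hδ'ε : δ' ≤ ε := min_le_right _ _
    have hδ'δ : δ' ≤ δ := min_le_left _ _
    obtain ⟨g, hg0, hgd, hgiso⟩ := hgeo x y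
    set d := dist x y with hdd
    set t : ℝ := 2 * ε - δ' with ht
    have htmem : t ∈ Set.Icc (0:ℝ) d := ⟨by linarith, by linarith⟩
    have h0mem : (0:ℝ) ∈ Set.Icc (0:ℝ) d := ⟨le_refl _, by linarith⟩
    have hdmem : d ∈ Set.Icc (0:ℝ) d := ⟨by linarith, le_refl _⟩
    set z := g t with hz
    have hdxz : dist x z = t := by
      have := hgiso 0 h0mem t htmem
      rw [hg0] at this
      rw [hz, this, abs_of_nonpos (by linarith)]; ring
    have hdzy : dist z y = d - t := by
      have := hgiso t htmem d hdmem
      rw [hgd] at this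
      rw [hz, this, abs_of_nonpos (by linarith)]; ring
    -- z belongs to some block
    have hzmem : z ∈ ⋃ u, B u := by rw [hcover]; trivial
    obtain ⟨u, hu⟩ := Set.mem_iUnion.mp hzmem
    have hxz : dist x z < 2 * ε := by rw [hdxz]; linarith
    have hvu : G.dist v u ≤ 1 := by
      rcases close_blocks hgeo G B ε hε hadj heps hx hu hxz with heq | hAdj
      · subst heq; simp [SimpleGraph.dist_self]
      · simpa using SimpleGraph.dist_le hAdj.toWalk
    have htri : G.dist v w ≤ G.dist v u + G.dist u w :=
      hconn.dist_triangle
    have huw : 2 * n ≤ G.dist u w := by omega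
    have hrec := ih u w huw z hu y hy
    rw [hdzy] at hrec
    push_cast
    linarith

/-- Let `X` be a geodesic metric space with a block decomposition
whose nerve is the tree `G` (blocks `B v` indexed by vertices, adjacency iff
nontrivial intersection), with ε-condition constant `ε > 0`. If the vertices of
two blocks are at tree-distance at least `2n`, then the blocks are at distance
at least `2nε` in `X`. -/
theorem stmt_13 {X V : Type*} [MetricSpace X] (hgeo : GeodesicSpace X)
    (G : SimpleGraph V) (htree : G.IsTree)
    (B : V → Set X)
    (hclosed : ∀ v, IsClosed (B v)) (hconv : ∀ v, MetricConvex (B v))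
    (hcover : (⋃ v, B v) = Set.univ)
    (htwo : ∀ v, ∃ u w, u ≠ w ∧ G.Adj v u ∧ G.Adj v w)
    (ε : ℝ) (hε : 0 < ε)
    (hadj : ∀ v w, v ≠ w → ((B v ∩ B w).Nonempty ↔ G.Adj v w))
    (heps : ∀ v w, v ≠ w → ((B v ∩ B w).Nonempty ↔
      (Metric.thickening ε (B v) ∩ Metric.thickening ε (B w)).Nonempty))
    (n : ℕ) (v w : V) (hd : 2 * n ≤ G.dist v w) :
    ∀ x ∈ B v, ∀ y ∈ B w, 2 * n * ε ≤ dist x y :=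
  aux_main hgeo G htree.isConnected B hcover ε hε hadj heps n v w hd
end

section
/- Let X be a CAT(0) space with block decomposition B such that each block has path connected visual boundary and each wall has nonempty visual boundary. Then the rational part of the boundary, ∂_R X = ⋃_{B∈B} ∂B, is path connected. -/
/-- The visual boundary based at `x₀`: geodesic rays based at `x₀`, topologized
as a subspace of `ℝ → X` (for based geodesic rays, pointwise convergence agrees
with the cone topology). -/
abbrev VisualBoundary (X : Type*) [MetricSpace X] (x₀ : X) : Type _ :=
  {r : ℝ → X // IsGeodesicRay r ∧ r 0 = x₀}

/-- The trace of a subset `S ⊆ X` in the visual boundary: boundary points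
represented by a geodesic ray lying in `S`. -/
def bdryIn {X : Type*} [MetricSpace X] (x₀ : X) (S : Set X) :
    Set (VisualBoundary X x₀) :=
  {r | ∃ ρ : ℝ → X, IsGeodesicRay ρ ∧ (∀ t ≥ (0:ℝ), ρ t ∈ S) ∧
    AsymptoticRays r.1 ρ}

/-- In a geodesic space, any two points are joined by a path. -/
lemma joinedIn_univ_of_geodesic {X : Type*} [MetricSpace X] (h : GeodesicSpace X) (x y : X) :
    JoinedIn (Set.univ : Set X) x y := by
  obtain ⟨g, hg0, hgd, hiso⟩ := h x y
  set d := dist x y with hd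
  have hd0 : 0 ≤ d := dist_nonneg
  set c : ℝ → ℝ := fun t => max (min t d) 0 with hc
  have hcmem : ∀ t, c t ∈ Set.Icc 0 d := by
    intro t
    refine ⟨le_max_right _ _, max_le (min_le_right _ _) hd0⟩
  have hclip : ∀ s t, |c s - c t| ≤ |s - t| := by
    intro s t
    calc |c s - c t| ≤ |min s d - min t d| := abs_max_sub_max_le_abs _ _ _
      _ ≤ max |s - t| |d - d| := abs_min_sub_min_le_max _ _ _ _
      _ = |s - t| := by simp
  have hlip : LipschitzWith 1 (fun t => g (c t)) := by
    refine LipschitzWith.of_dist_le_mul fun s t => ?_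
    rw [hiso _ (hcmem s) _ (hcmem t)]
    simpa [Real.dist_eq] using hclip s t
  have hcont : Continuous fun t : ℝ => g (c t) := hlip.continuous
  have hc0 : c 0 = 0 := by
    simp [hc, min_eq_left hd0]
  have hcd : c d = d := by
    simp [hc, hd0]
  refine ⟨⟨⟨fun t : unitInterval => g (c ((t : ℝ) * d)), ?_⟩, ?_, ?_⟩, fun _ => Set.mem_univ _⟩
  · exact hcont.comp (continuous_subtype_val.mul continuous_const)
  · simpa [hc0] using hg0
  · simpa [hcd] using hgd

/-- For a block decomposition `𝓑` of a CAT(0) space `X` in which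
every block has path connected visual boundary and every wall has nonempty
visual boundary, the rational part of the boundary, `∂_R X = ⋃_{B∈𝓑} ∂B`, is
path connected. -/
theorem stmt_15 {X : Type*} [MetricSpace X] [ProperSpace X] (hX : CAT0 X)
    (𝓑 : Set (Set X))
    (hclosed : ∀ B ∈ 𝓑, IsClosed B) (hconv : ∀ B ∈ 𝓑, MetricConvex B)
    (hcover : ⋃₀ 𝓑 = Set.univ)
    (htwo : ∀ B ∈ 𝓑, ∃ B₁ ∈ 𝓑, ∃ B₂ ∈ 𝓑, B₁ ≠ B₂ ∧ B₁ ≠ B ∧ B₂ ≠ B ∧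
      (B ∩ B₁).Nonempty ∧ (B ∩ B₂).Nonempty)
    (hparity : ∃ sign : Set X → Bool, ∀ B ∈ 𝓑, ∀ B' ∈ 𝓑, B ≠ B' →
      (B ∩ B').Nonempty → sign B ≠ sign B')
    (ε : ℝ) (hε : 0 < ε)
    (heps : ∀ B ∈ 𝓑, ∀ B' ∈ 𝓑, B ≠ B' → ((B ∩ B').Nonempty ↔
      (Metric.thickening ε B ∩ Metric.thickening ε B').Nonempty))
    (x₀ : X)
    (hblocks : ∀ B ∈ 𝓑, IsPathConnected (bdryIn x₀ B))
    (hwalls : ∀ B ∈ 𝓑, ∀ B' ∈ 𝓑, B ≠ B' → (B ∩ B').Nonempty →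
      (bdryIn x₀ (B ∩ B')).Nonempty) :
    IsPathConnected (⋃ B ∈ 𝓑, bdryIn x₀ B) := by
  classical
  set U : Set (VisualBoundary X x₀) := ⋃ B ∈ 𝓑, bdryIn x₀ B with hU
  -- every block's boundary trace is contained in U
  have hsubU : ∀ B ∈ 𝓑, bdryIn x₀ B ⊆ U := fun B hB =>
    Set.subset_biUnion_of_mem (u := fun B => bdryIn x₀ B) hB
  -- monotonicity of bdryIn
  have hmono : ∀ S T : Set X, S ⊆ T → bdryIn x₀ S ⊆ bdryIn x₀ T := by
    intro S T hST r hr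
    obtain ⟨ρ, h1, h2, h3⟩ := hr
    exact ⟨ρ, h1, fun t ht => hST (h2 t ht), h3⟩
  -- each block is nonempty
  have hne : ∀ B ∈ 𝓑, B.Nonempty := by
    intro B hB
    obtain ⟨r, hr, -⟩ := hblocks B hB
    obtain ⟨ρ, -, h2, -⟩ := hr
    exact ⟨ρ 0, h2 0 le_rfl⟩
  -- joining within a block
  have joinB : ∀ B ∈ 𝓑, ∀ p ∈ bdryIn x₀ B, ∀ q ∈ bdryIn x₀ B, JoinedIn U p q := by
    intro B hB p hp q hq
    exact ((hblocks B hB).joinedIn p hp q hq).mono (hsubU B hB)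
  -- adjacency relation
  set R : Set X → Set X → Prop :=
    fun B B' => B ∈ 𝓑 ∧ B' ∈ 𝓑 ∧ (B ∩ B').Nonempty with hR
  -- joining across the equivalence closure of adjacency
  have main : ∀ B B', Relation.EqvGen R B B' →
      (B ∈ 𝓑 ∧ B' ∈ 𝓑 ∧ ∀ p ∈ bdryIn x₀ B, ∀ q ∈ bdryIn x₀ B', JoinedIn U p q) ∨ B = B' := by
    intro B B' h
    induction h with
    | rel B B' hr =>
      obtain ⟨hB, hB', hint⟩ := hr
      by_cases heq : B = B'
      · exact Or.inr heq
      · left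
        refine ⟨hB, hB', fun p hp q hq => ?_⟩
        obtain ⟨w, hw⟩ := hwalls B hB B' hB' heq hint
        have hwB : w ∈ bdryIn x₀ B := hmono _ _ Set.inter_subset_left hw
        have hwB' : w ∈ bdryIn x₀ B' := hmono _ _ Set.inter_subset_right hw
        exact (joinB B hB p hp w hwB).trans (joinB B' hB' w hwB' q hq)
    | refl B => exact Or.inr rfl
    | symm B B' _ ih =>
      rcases ih with ⟨hB, hB', f⟩ | heq
      · exact Or.inl ⟨hB', hB, fun p hp q hq => (f q hq p hp).symm⟩
      · exact Or.inr heq.symm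
    | trans B B' B'' _ _ ih1 ih2 =>
      rcases ih1 with ⟨hB, hB', f1⟩ | heq1
      · rcases ih2 with ⟨hB'2, hB'', f2⟩ | heq2
        · left
          refine ⟨hB, hB'', fun p hp q hq => ?_⟩
          obtain ⟨w, hw, -⟩ := hblocks B' hB'
          exact (f1 p hp w hw).trans (f2 w hw q hq)
        · exact Or.inl ⟨hB, heq2 ▸ hB', heq2 ▸ f1⟩
      · rcases ih2 with ⟨hB', hB'', f2⟩ | heq2
        · exact Or.inl ⟨heq1 ▸ hB', hB'', heq1 ▸ f2⟩
        · exact Or.inr (heq1.trans heq2)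
  -- X is connected
  have hXconn : IsPreconnected (Set.univ : Set X) := by
    have : IsPathConnected (Set.univ : Set X) :=
      ⟨x₀, Set.mem_univ _, fun {y} _ => joinedIn_univ_of_geodesic hX.1 x₀ y⟩
    exact this.isConnected.isPreconnected
  -- base block
  obtain ⟨B₀, hB₀, _⟩ : ∃ B ∈ 𝓑, x₀ ∈ B := by
    have : x₀ ∈ ⋃₀ 𝓑 := hcover.symm ▸ Set.mem_univ x₀
    exact this
  -- all blocks are EqvGen-related to B₀
  have key : ∀ B ∈ 𝓑, Relation.EqvGen R B₀ B := by
    intro B hB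
    by_contra hcon
    set S : Set (Set X) := {B | B ∈ 𝓑 ∧ Relation.EqvGen R B₀ B} with hS
    set u := Metric.thickening ε (⋃₀ S) with hu
    set v := Metric.thickening ε (⋃₀ (𝓑 \ S)) with hv
    have hcovuv : Set.univ ⊆ u ∪ v := by
      intro z _
      have hz : z ∈ ⋃₀ 𝓑 := hcover.symm ▸ Set.mem_univ z
      obtain ⟨C, hC, hzC⟩ := hz
      by_cases hCS : C ∈ S
      · exact Or.inl (Metric.self_subset_thickening hε _ ⟨C, hCS, hzC⟩)
      · exact Or.inr (Metric.self_subset_thickening hε _ ⟨C, ⟨hC, hCS⟩, hzC⟩)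
    have hdisj : Set.univ ∩ (u ∩ v) = ∅ := by
      rw [Set.eq_empty_iff_forall_notMem]
      rintro z ⟨_, hzu, hzv⟩
      rw [hu, Metric.mem_thickening_iff] at hzu
      rw [hv, Metric.mem_thickening_iff] at hzv
      obtain ⟨a, ⟨C, hCS, haC⟩, hza⟩ := hzu
      obtain ⟨b, ⟨C', hC'S, hbC'⟩, hzb⟩ := hzv
      have hCC' : C ≠ C' := by
        rintro rfl; exact hC'S.2 hCS
      have hthick : (Metric.thickening ε C ∩ Metric.thickening ε C').Nonempty := by
        refine ⟨z, ?_, ?_⟩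
        · exact Metric.mem_thickening_iff.2 ⟨a, haC, hza⟩
        · exact Metric.mem_thickening_iff.2 ⟨b, hbC', hzb⟩
      have hint : (C ∩ C').Nonempty := (heps C hCS.1 C' hC'S.1 hCC').2 hthick
      exact hC'S.2 ⟨hC'S.1, Relation.EqvGen.trans _ _ _ hCS.2 (Relation.EqvGen.rel _ _ ⟨hCS.1, hC'S.1, hint⟩)⟩
    have hBnotS : B ∈ 𝓑 \ S := ⟨hB, fun hBS => hcon hBS.2⟩
    obtain ⟨b, hbB⟩ := hne B hB
    obtain ⟨a, haB₀⟩ := hne B₀ hB₀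
    have huNE : (Set.univ ∩ u).Nonempty :=
      ⟨a, Set.mem_univ _, Metric.self_subset_thickening hε _
        ⟨B₀, ⟨hB₀, Relation.EqvGen.refl _⟩, haB₀⟩⟩
    have hvNE : (Set.univ ∩ v).Nonempty :=
      ⟨b, Set.mem_univ _, Metric.self_subset_thickening hε _ ⟨B, hBnotS, hbB⟩⟩
    have := hXconn u v Metric.isOpen_thickening Metric.isOpen_thickening hcovuv huNE hvNE
    rw [hdisj] at this
    exact Set.not_nonempty_empty this
  -- conclude path connectedness
  obtain ⟨p₀, hp₀, -⟩ := hblocks B₀ hB₀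
  refine ⟨p₀, hsubU B₀ hB₀ hp₀, ?_⟩
  intro q hq
  rw [hU, Set.mem_iUnion₂] at hq
  obtain ⟨B, hB, hqB⟩ := hq
  rcases main B₀ B (key B hB) with ⟨_, _, f⟩ | heq
  · exact f p₀ hp₀ q hqB
  · exact joinB B₀ hB₀ p₀ hp₀ q (heq ▸ hqB)
end
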